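/- The 7×7 skew-symmetric matrix of linear forms M(x₀,x₁,x₂) = [[0,0,0,x₁,0,0,−x₀],[0,0,0,0,x₂,0,−x₁],[0,0,0,0,0,x₀,−x₂],[−x₁,0,0,0,−x₀,x₂,0],[0,−x₂,0,x₀,0,−x₁,0],[0,0,−x₀,−x₂,x₁,0,0],[x₀,x₁,x₂,0,0,0,0]] has rank exactly 6 for every (x₀,x₁,x₂) ∈ ℂ³ with (x₀,x₁,x₂) ≠ (0,0,0). -/

import Mathlib

open Matrix

set_option maxRecDepth 8000
set_option maxHeartbeats 1600000

@[simp] lemma cons_val_five' {α : Type*} {m : ℕ} (x : α) (u : Fin (m + 5) → α) :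
    vecCons x u 5 = vecHead (vecTail (vecTail (vecTail (vecTail u)))) := rfl

@[simp] lemma cons_val_six' {α : Type*} {m : ℕ} (x : α) (u : Fin (m + 6) → α) :
    vecCons x u 6 = vecHead (vecTail (vecTail (vecTail (vecTail (vecTail u))))) := rfl

lemma det_eq_zero_of_skew (A : Matrix (Fin 7) (Fin 7) ℂ) (hA : Aᵀ = -A) : A.det = 0 := by
  have h1 : A.det = (-A).det := by rw [← hA, Matrix.det_transpose]
  have h2 : (-A).det = (-1 : ℂ) ^ 7 * A.det := by
    rw [Matrix.det_neg, Fintype.card_fin]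
  rw [h2] at h1
  have h4 : (2 : ℂ) * A.det = 0 := by
    norm_num at h1
    linear_combination h1
  have h3 : (2 : ℂ) ≠ 0 := by norm_num
  exact (mul_eq_zero.mp h4).resolve_left h3

lemma rank_le_six_of_det_eq_zero (A : Matrix (Fin 7) (Fin 7) ℂ) (hA : A.det = 0) :
    A.rank ≤ 6 := by
  obtain ⟨v, hv, hMv⟩ := (Matrix.exists_mulVec_eq_zero_iff).mpr hA
  have hrn := LinearMap.finrank_range_add_finrank_ker A.mulVecLin
  have hker : 0 < Module.finrank ℂ (LinearMap.ker A.mulVecLin) := by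
    rw [Module.finrank_pos_iff]
    exact ⟨⟨⟨v, by simpa [Matrix.mulVecLin_apply] using hMv⟩, ⟨0, Submodule.zero_mem _⟩,
      by simpa using hv⟩⟩
  have hfr : Module.finrank ℂ (Fin 7 → ℂ) = 7 := by simp
  rw [hfr] at hrn
  rw [Matrix.rank]
  omega

lemma myrank_submatrix_le (A : Matrix (Fin 7) (Fin 7) ℂ) (f g : Fin 6 → Fin 7) :
    (A.submatrix f g).rank ≤ A.rank := by
  have h1 : A.submatrix f g =
      ((1 : Matrix (Fin 7) (Fin 7) ℂ).submatrix f (Equiv.refl (Fin 7))) *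
      (A * ((1 : Matrix (Fin 7) (Fin 7) ℂ).submatrix (Equiv.refl (Fin 7)) g)) := by
    rw [Matrix.mul_submatrix_one, Matrix.one_submatrix_mul]
    simp
  rw [h1]
  exact le_trans (Matrix.rank_mul_le_right _ _) (Matrix.rank_mul_le_left _ _)

lemma rank_ge_of_inv (A : Matrix (Fin 7) (Fin 7) ℂ) (f : Fin 6 → Fin 7)
    (C : Matrix (Fin 6) (Fin 6) ℂ) (d : ℂ) (hd : d ≠ 0)
    (hBC : (A.submatrix f f) * C = d • 1) : 6 ≤ A.rank := by
  have hdet : (A.submatrix f f).det * C.det = d ^ 6 := by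
    rw [← Matrix.det_mul, hBC]
    simp [Matrix.det_smul]
  have hdB : (A.submatrix f f).det ≠ 0 := by
    intro h0
    rw [h0, zero_mul] at hdet
    exact pow_ne_zero 6 hd hdet.symm
  have h1 := Matrix.rank_of_isUnit (A.submatrix f f)
    ((Matrix.isUnit_iff_isUnit_det _).mpr (isUnit_iff_ne_zero.mpr hdB))
  have h2 := myrank_submatrix_le A f f
  simp only [Fintype.card_fin] at h1
  omega

lemma hskew_lemma (x₀ x₁ x₂ : ℂ) :
    (!![0, 0, 0, x₁, 0, 0, -x₀;
       0, 0, 0, 0, x₂, 0, -x₁;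
       0, 0, 0, 0, 0, x₀, -x₂;
       -x₁, 0, 0, 0, -x₀, x₂, 0;
       0, -x₂, 0, x₀, 0, -x₁, 0;
       0, 0, -x₀, -x₂, x₁, 0, 0;
       x₀, x₁, x₂, 0, 0, 0, 0] : Matrix (Fin 7) (Fin 7) ℂ)ᵀ = -(!![0, 0, 0, x₁, 0, 0, -x₀;
       0, 0, 0, 0, x₂, 0, -x₁;
       0, 0, 0, 0, 0, x₀, -x₂;
       -x₁, 0, 0, 0, -x₀, x₂, 0;
       0, -x₂, 0, x₀, 0, -x₁, 0;
       0, 0, -x₀, -x₂, x₁, 0, 0;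
       x₀, x₁, x₂, 0, 0, 0, 0] : Matrix (Fin 7) (Fin 7) ℂ) := by
  ext i j
  fin_cases i <;> fin_cases j <;>
    simp [Matrix.vecHead, Matrix.vecTail] <;> ring

lemma case_x2 (x₂ : ℂ) (h2 : x₂ ≠ 0) :
    6 ≤ (!![0, 0, 0, 0, 0, 0, -0;
       0, 0, 0, 0, x₂, 0, -0;
       0, 0, 0, 0, 0, 0, -x₂;
       -0, 0, 0, 0, -0, x₂, 0;
       0, -x₂, 0, 0, 0, -0, 0;
       0, 0, -0, -x₂, 0, 0, 0;
       0, 0, x₂, 0, 0, 0, 0] : Matrix (Fin 7) (Fin 7) ℂ).rank := by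
  refine rank_ge_of_inv _ ![1,2,3,4,5,6]
    (!![0, 0, 0, -x₂, 0, 0;
       0, 0, 0, 0, 0, x₂;
       0, 0, 0, 0, -x₂, 0;
       x₂, 0, 0, 0, 0, 0;
       0, 0, x₂, 0, 0, 0;
       0, -x₂, 0, 0, 0, 0])
    (x₂ * x₂) (mul_ne_zero h2 h2) ?_
  ext i j
  rw [Matrix.mul_apply]
  fin_cases i <;> fin_cases j <;>
    simp [Matrix.mul_apply, Fin.sum_univ_six, Matrix.one_apply,
      Matrix.vecHead, Matrix.vecTail] <;> ring

lemma case_x1 (x₁ : ℂ) (h1 : x₁ ≠ 0) :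
    6 ≤ (!![0, 0, 0, x₁, 0, 0, -0;
       0, 0, 0, 0, 0, 0, -x₁;
       0, 0, 0, 0, 0, 0, -0;
       -x₁, 0, 0, 0, -0, 0, 0;
       0, -0, 0, 0, 0, -x₁, 0;
       0, 0, -0, -0, x₁, 0, 0;
       0, x₁, 0, 0, 0, 0, 0] : Matrix (Fin 7) (Fin 7) ℂ).rank := by
  refine rank_ge_of_inv _ ![0,1,3,4,5,6]
    (!![0, 0, -x₁, 0, 0, 0;
       0, 0, 0, 0, 0, x₁;
       x₁, 0, 0, 0, 0, 0;
       0, 0, 0, 0, x₁, 0;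
       0, 0, 0, -x₁, 0, 0;
       0, -x₁, 0, 0, 0, 0])
    (x₁ * x₁) (mul_ne_zero h1 h1) ?_
  ext i j
  rw [Matrix.mul_apply]
  fin_cases i <;> fin_cases j <;>
    simp [Matrix.mul_apply, Fin.sum_univ_six, Matrix.one_apply,
      Matrix.vecHead, Matrix.vecTail] <;> ring

lemma case_x0 (x₀ : ℂ) (h0 : x₀ ≠ 0) :
    6 ≤ (!![0, 0, 0, 0, 0, 0, -x₀;
       0, 0, 0, 0, 0, 0, -0;
       0, 0, 0, 0, 0, x₀, -0;
       -0, 0, 0, 0, -x₀, 0, 0;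
       0, -0, 0, x₀, 0, -0, 0;
       0, 0, -x₀, -0, 0, 0, 0;
       x₀, 0, 0, 0, 0, 0, 0] : Matrix (Fin 7) (Fin 7) ℂ).rank := by
  refine rank_ge_of_inv _ ![0,2,3,4,5,6]
    (!![0, 0, 0, 0, 0, x₀;
       0, 0, 0, 0, -x₀, 0;
       0, 0, 0, x₀, 0, 0;
       0, 0, -x₀, 0, 0, 0;
       0, x₀, 0, 0, 0, 0;
       -x₀, 0, 0, 0, 0, 0])
    (x₀ * x₀) (mul_ne_zero h0 h0) ?_
  ext i j
  rw [Matrix.mul_apply]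
  fin_cases i <;> fin_cases j <;>
    simp [Matrix.mul_apply, Fin.sum_univ_six, Matrix.one_apply,
      Matrix.vecHead, Matrix.vecTail] <;> ring

lemma case_x1x2 (x₀ x₁ x₂ : ℂ) (h1 : x₁ ≠ 0) (h2 : x₂ ≠ 0) :
    6 ≤ (!![0, 0, 0, x₁, 0, 0, -x₀;
       0, 0, 0, 0, x₂, 0, -x₁;
       0, 0, 0, 0, 0, x₀, -x₂;
       -x₁, 0, 0, 0, -x₀, x₂, 0;
       0, -x₂, 0, x₀, 0, -x₁, 0;
       0, 0, -x₀, -x₂, x₁, 0, 0;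
       x₀, x₁, x₂, 0, 0, 0, 0] : Matrix (Fin 7) (Fin 7) ℂ).rank := by
  refine rank_ge_of_inv _ ![0,1,2,3,4,6]
    (!![0, -x₀*x₁*x₂^3, x₀*x₁^2*x₂^2, -x₁*x₂^4, 0, 0;
       x₀*x₁*x₂^3, 0, -x₀^2*x₁*x₂^2, 0, -x₁^2*x₂^3, 0;
       -x₀*x₁^2*x₂^2, x₀^2*x₁*x₂^2, 0, x₀*x₁*x₂^3, x₁^3*x₂^2, x₁^2*x₂^3;
       x₁*x₂^4, 0, -x₀*x₁*x₂^3, 0, 0, 0;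
       0, x₁^2*x₂^3, -x₁^3*x₂^2, 0, 0, 0;
       0, 0, -x₁^2*x₂^3, 0, 0, 0])
    (x₁^2*x₂^4) (mul_ne_zero (pow_ne_zero 2 h1) (pow_ne_zero 4 h2)) ?_
  ext i j
  rw [Matrix.mul_apply]
  fin_cases i <;> fin_cases j <;>
    simp [Matrix.mul_apply, Fin.sum_univ_six, Matrix.one_apply,
      Matrix.vecHead, Matrix.vecTail] <;> ring

lemma case_x0x2 (x₀ x₁ x₂ : ℂ) (h0 : x₀ ≠ 0) (h2 : x₂ ≠ 0) :
    6 ≤ (!![0, 0, 0, x₁, 0, 0, -x₀;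
       0, 0, 0, 0, x₂, 0, -x₁;
       0, 0, 0, 0, 0, x₀, -x₂;
       -x₁, 0, 0, 0, -x₀, x₂, 0;
       0, -x₂, 0, x₀, 0, -x₁, 0;
       0, 0, -x₀, -x₂, x₁, 0, 0;
       x₀, x₁, x₂, 0, 0, 0, 0] : Matrix (Fin 7) (Fin 7) ℂ).rank := by
  refine rank_ge_of_inv _ ![0,1,2,4,5,6]
    (!![0, -x₀^2*x₁*x₂^2, x₀^2*x₁^2*x₂, x₀^3*x₁*x₂, x₀^2*x₂^3, x₀^3*x₂^2;
       x₀^2*x₁*x₂^2, 0, -x₀^3*x₁*x₂, -x₀^4*x₂, 0, 0;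
       -x₀^2*x₁^2*x₂, x₀^3*x₁*x₂, 0, 0, -x₀^3*x₂^2, 0;
       -x₀^3*x₁*x₂, x₀^4*x₂, 0, 0, 0, 0;
       -x₀^2*x₂^3, 0, x₀^3*x₂^2, 0, 0, 0;
       -x₀^3*x₂^2, 0, 0, 0, 0, 0])
    (x₀^4*x₂^2) (mul_ne_zero (pow_ne_zero 4 h0) (pow_ne_zero 2 h2)) ?_
  ext i j
  rw [Matrix.mul_apply]
  fin_cases i <;> fin_cases j <;>
    simp [Matrix.mul_apply, Fin.sum_univ_six, Matrix.one_apply,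
      Matrix.vecHead, Matrix.vecTail] <;> ring

lemma case_x0x1 (x₀ x₁ x₂ : ℂ) (h0 : x₀ ≠ 0) (h1 : x₁ ≠ 0) :
    6 ≤ (!![0, 0, 0, x₁, 0, 0, -x₀;
       0, 0, 0, 0, x₂, 0, -x₁;
       0, 0, 0, 0, 0, x₀, -x₂;
       -x₁, 0, 0, 0, -x₀, x₂, 0;
       0, -x₂, 0, x₀, 0, -x₁, 0;
       0, 0, -x₀, -x₂, x₁, 0, 0;
       x₀, x₁, x₂, 0, 0, 0, 0] : Matrix (Fin 7) (Fin 7) ℂ).rank := by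
  refine rank_ge_of_inv _ ![0,1,2,3,5,6]
    (!![0, -x₀*x₁^2*x₂^2, x₀*x₁^3*x₂, -x₀^2*x₁^3, 0, 0;
       x₀*x₁^2*x₂^2, 0, -x₀^2*x₁^2*x₂, x₀^3*x₁^2, x₀*x₁^3*x₂, x₀^2*x₁^3;
       -x₀*x₁^3*x₂, x₀^2*x₁^2*x₂, 0, 0, -x₀*x₁^4, 0;
       x₀^2*x₁^3, -x₀^3*x₁^2, 0, 0, 0, 0;
       0, -x₀*x₁^3*x₂, x₀*x₁^4, 0, 0, 0;
       0, -x₀^2*x₁^3, 0, 0, 0, 0])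
    (x₀^2*x₁^4) (mul_ne_zero (pow_ne_zero 2 h0) (pow_ne_zero 4 h1)) ?_
  ext i j
  rw [Matrix.mul_apply]
  fin_cases i <;> fin_cases j <;>
    simp [Matrix.mul_apply, Fin.sum_univ_six, Matrix.one_apply,
      Matrix.vecHead, Matrix.vecTail] <;> ring

theorem stmt1 (x₀ x₁ x₂ : ℂ) (h : (x₀, x₁, x₂) ≠ (0, 0, 0)) :
    (!![0, 0, 0, x₁, 0, 0, -x₀;
       0, 0, 0, 0, x₂, 0, -x₁;
       0, 0, 0, 0, 0, x₀, -x₂;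
       -x₁, 0, 0, 0, -x₀, x₂, 0;
       0, -x₂, 0, x₀, 0, -x₁, 0;
       0, 0, -x₀, -x₂, x₁, 0, 0;
       x₀, x₁, x₂, 0, 0, 0, 0] : Matrix (Fin 7) (Fin 7) ℂ).rank = 6 := by
  have hub := rank_le_six_of_det_eq_zero _ (det_eq_zero_of_skew _ (hskew_lemma x₀ x₁ x₂))
  have hlb : 6 ≤ (!![0, 0, 0, x₁, 0, 0, -x₀;
       0, 0, 0, 0, x₂, 0, -x₁;
       0, 0, 0, 0, 0, x₀, -x₂;
       -x₁, 0, 0, 0, -x₀, x₂, 0;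
       0, -x₂, 0, x₀, 0, -x₁, 0;
       0, 0, -x₀, -x₂, x₁, 0, 0;
       x₀, x₁, x₂, 0, 0, 0, 0] : Matrix (Fin 7) (Fin 7) ℂ).rank := by
    by_cases h0 : x₀ = 0
    · by_cases h1 : x₁ = 0
      · have h2 : x₂ ≠ 0 := by
          intro h2
          exact h (by rw [h0, h1, h2])
        subst h0; subst h1
        exact case_x2 x₂ h2
      · by_cases h2 : x₂ = 0
        · subst h0; subst h2
          exact case_x1 x₁ h1
        · exact case_x1x2 x₀ x₁ x₂ h1 h2
    · by_cases h1 : x₁ = 0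
      · by_cases h2 : x₂ = 0
        · subst h1; subst h2
          exact case_x0 x₀ h0
        · exact case_x0x2 x₀ x₁ x₂ h0 h2
      · exact case_x0x1 x₀ x₁ x₂ h0 h1
  omega
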